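/- Let m(0) < 0, 0 < δ < 1/2, and let q : [0,T₁] → (0,1] and r : [0,T₁] → ℝ satisfy q(t) ≤ r(t) ≤ (1-δ)⁻¹ q(t) and (1+δ)m(0) ≤ dr/dt ≤ (1-δ)m(0) for all t ∈ [0,T₁], with r differentiable. Then for all s > 0 with s ≠ 1 and all t ∈ [0,T₁], ∫₀ᵗ q(τ)^{-s} dτ ≤ -(1-δ)^{-(s+1)} (1-s)^{-1} m(0)^{-1} [(1-δ)^{s-1} - q(t)^{1-s}]. -/

import Mathlib

open Set intervalIntegral MeasureTheory

/-- Lemma A.3 (case `ε = 1`, `s ≠ 1`): integral bound for negative powers of `q`. -/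
theorem q_power_integral_bound
    (δ m0 T₁ : ℝ) (q r r' : ℝ → ℝ)
    (hm0 : m0 < 0) (hδ : 0 < δ) (hδ' : δ < 1/2) (hT : 0 < T₁)
    (hq : ∀ t ∈ Icc 0 T₁, 0 < q t ∧ q t ≤ 1)
    (hqr : ∀ t ∈ Icc 0 T₁, q t ≤ r t ∧ r t ≤ (1 - δ)⁻¹ * q t)
    (hderiv : ∀ t ∈ Icc 0 T₁, HasDerivAt r (r' t) t)
    (hlow : ∀ t ∈ Icc 0 T₁, (1 + δ) * m0 ≤ r' t)
    (hup : ∀ t ∈ Icc 0 T₁, r' t ≤ (1 - δ) * m0) :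
    ∀ s : ℝ, 0 < s → s ≠ 1 → ∀ t ∈ Icc 0 T₁,
      ∫ τ in (0:ℝ)..t, (q τ) ^ (-s) ≤
        -((1 - δ) ^ (-(s + 1)) * (1 - s)⁻¹ * m0⁻¹ *
          ((1 - δ) ^ (s - 1) - (q t) ^ (1 - s))) := by
  intro s hs hs1 t ht
  obtain ⟨ht0, htT⟩ := ht
  have htmem : t ∈ Icc (0:ℝ) T₁ := ⟨ht0, htT⟩
  have h0mem : (0:ℝ) ∈ Icc (0:ℝ) T₁ := ⟨le_rfl, hT.le⟩
  have hδpos : (0:ℝ) < 1 - δ := by linarith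
  have hδlt1 : (1:ℝ) - δ ≤ 1 := by linarith
  have hsub : Icc (0:ℝ) t ⊆ Icc 0 T₁ := Icc_subset_Icc le_rfl htT
  have hrpos : ∀ τ ∈ Icc (0:ℝ) T₁, 0 < r τ := fun τ hτ =>
    lt_of_lt_of_le (hq τ hτ).1 (hqr τ hτ).1
  have hs1' : (1:ℝ) - s ≠ 0 := fun h => hs1 (by linarith)
  have hm0inv : m0⁻¹ < 0 := inv_lt_zero.2 hm0
  have hApos : (0:ℝ) < (1 - δ) ^ (-(s + 1)) := Real.rpow_pos_of_pos hδpos _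
  have hqt1 : 0 < q t := (hq t htmem).1
  -- the right hand side is nonnegative
  have hRHS : 0 ≤ -((1 - δ) ^ (-(s + 1)) * (1 - s)⁻¹ * m0⁻¹ *
      ((1 - δ) ^ (s - 1) - (q t) ^ (1 - s))) := by
    rcases lt_or_gt_of_ne hs1 with h1 | h1
    · have h2 : (q t) ^ (1 - s) ≤ 1 := Real.rpow_le_one hqt1.le (hq t htmem).2 (by linarith)
      have h3 : (1:ℝ) ≤ (1 - δ) ^ (s - 1) :=
        Real.one_le_rpow_of_pos_of_le_one_of_nonpos hδpos hδlt1 (by linarith)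
      have h4 : (0:ℝ) < (1 - s)⁻¹ := by
        have : (0:ℝ) < 1 - s := by linarith
        positivity
      have hAB : (0:ℝ) < (1 - δ) ^ (-(s + 1)) * (1 - s)⁻¹ := mul_pos hApos h4
      have hABC : (1 - δ) ^ (-(s + 1)) * (1 - s)⁻¹ * m0⁻¹ < 0 :=
        mul_neg_of_pos_of_neg hAB hm0inv
      have := mul_nonpos_of_nonpos_of_nonneg hABC.le
        (by linarith : (0:ℝ) ≤ (1 - δ) ^ (s - 1) - q t ^ (1 - s))
      linarith
    · have h2 : (1:ℝ) ≤ (q t) ^ (1 - s) :=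
        Real.one_le_rpow_of_pos_of_le_one_of_nonpos hqt1 (hq t htmem).2 (by linarith)
      have h3 : (1 - δ) ^ (s - 1) ≤ 1 := Real.rpow_le_one hδpos.le hδlt1 (by linarith)
      have h4 : (1 - s)⁻¹ < 0 := inv_lt_zero.2 (by linarith)
      have hABC : 0 < (1 - δ) ^ (-(s + 1)) * (1 - s)⁻¹ * m0⁻¹ :=
        mul_pos_of_neg_of_neg (mul_neg_of_pos_of_neg hApos h4) hm0inv
      have := mul_nonpos_of_nonneg_of_nonpos hABC.le
        (by linarith : (1 - δ) ^ (s - 1) - q t ^ (1 - s) ≤ 0)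
      linarith
  by_cases hint : IntervalIntegrable (fun τ => q τ ^ (-s)) volume 0 t
  swap
  · rw [intervalIntegral.integral_undef hint]; exact hRHS
  -- continuity of r on [0, T₁]
  have hrc : ContinuousOn r (Icc 0 T₁) := fun τ hτ =>
    (hderiv τ hτ).continuousAt.continuousWithinAt
  set f : ℝ → ℝ := fun τ => r τ ^ (-s) * r' τ with hf
  -- FTC ingredients
  have hF : ∀ τ ∈ uIcc (0:ℝ) t, HasDerivAt (fun x => (1 - s)⁻¹ * r x ^ (1 - s)) (f τ) τ := by
    intro τ hτ
    rw [uIcc_of_le ht0] at hτ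
    have hτ' := hsub hτ
    have h := ((hderiv τ hτ').rpow_const (p := 1 - s) (Or.inl (hrpos τ hτ').ne')).const_mul ((1 - s)⁻¹)
    have he : (1 - s) - 1 = -s := by ring
    rw [he] at h
    refine h.congr_deriv ?_
    rw [mul_comm (r' τ), mul_assoc (1 - s), ← mul_assoc ((1 - s)⁻¹), inv_mul_cancel₀ hs1', one_mul, mul_comm]
  -- integrability of f on [0, t]
  have hmeasf : AEStronglyMeasurable f ((volume : Measure ℝ).restrict (Icc 0 t)) := by
    have h1 : ContinuousOn (fun τ => r τ ^ (-s)) (Icc 0 t) :=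
      (hrc.mono hsub).rpow_const (fun τ hτ => Or.inl (hrpos τ (hsub hτ)).ne')
    have h2 : AEStronglyMeasurable r' ((volume : Measure ℝ).restrict (Icc 0 t)) := by
      refine ((measurable_deriv r).aestronglyMeasurable.restrict).congr ?_
      filter_upwards [ae_restrict_mem measurableSet_Icc] with τ hτ
      exact (hderiv τ (hsub hτ)).deriv
    exact (h1.aestronglyMeasurable measurableSet_Icc).mul h2
  obtain ⟨τ₀, hτ₀, hmin⟩ :=
    isCompact_Icc.exists_isMinOn (nonempty_Icc.2 ht0) (hrc.mono hsub)
  have hc : 0 < r τ₀ := hrpos τ₀ (hsub hτ₀)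
  have hbdd : ∀ᵐ τ ∂((volume : Measure ℝ).restrict (Icc 0 t)),
      ‖f τ‖ ≤ (r τ₀) ^ (-s) * ((1 + δ) * (-m0)) := by
    filter_upwards [ae_restrict_mem measurableSet_Icc] with τ hτ
    have hτ' := hsub hτ
    have h1 : r τ ^ (-s) ≤ r τ₀ ^ (-s) :=
      Real.rpow_le_rpow_of_nonpos hc (hmin hτ) (by linarith)
    have h2 : |r' τ| ≤ (1 + δ) * (-m0) := by
      have := hlow τ hτ'; have := hup τ hτ'
      rw [abs_le]; constructor <;> nlinarith
    have h3 : 0 ≤ r τ ^ (-s) := (Real.rpow_pos_of_pos (hrpos τ hτ') _).le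
    calc ‖f τ‖ = r τ ^ (-s) * |r' τ| := by
          rw [hf]; simp [abs_mul, abs_of_nonneg h3]
      _ ≤ r τ₀ ^ (-s) * ((1 + δ) * (-m0)) :=
          mul_le_mul h1 h2 (abs_nonneg _) (Real.rpow_pos_of_pos hc _).le
  have hintf : IntervalIntegrable f volume 0 t :=
    (intervalIntegrable_iff_integrableOn_Icc_of_le ht0).2
      ⟨hmeasf, HasFiniteIntegral.restrict_of_bounded _ measure_Icc_lt_top hbdd⟩
  -- pointwise bound
  set K : ℝ := (1 - δ) ^ (-s) * ((1 - δ) * m0)⁻¹ with hKdef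
  have hKneg : ((1 - δ) * m0)⁻¹ < 0 := inv_lt_zero.2 (mul_neg_of_pos_of_neg hδpos hm0)
  have hpt : ∀ τ ∈ Icc (0:ℝ) t, q τ ^ (-s) ≤ K * f τ := by
    intro τ hτ
    have hτ' := hsub hτ
    have hrτ := hrpos τ hτ'
    have hA : 0 < r τ ^ (-s) := Real.rpow_pos_of_pos hrτ _
    -- (1-δ) * r τ ≤ q τ
    have h1 : (1 - δ) * r τ ≤ q τ := by
      have h := mul_le_mul_of_nonneg_left (hqr τ hτ').2 hδpos.le
      calc (1 - δ) * r τ ≤ (1 - δ) * ((1 - δ)⁻¹ * q τ) := h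
        _ = q τ := by field_simp
    have h2 : q τ ^ (-s) ≤ (1 - δ) ^ (-s) * r τ ^ (-s) := by
      have := Real.rpow_le_rpow_of_nonpos (mul_pos hδpos hrτ) h1 (by linarith : -s ≤ 0)
      rwa [Real.mul_rpow hδpos.le hrτ.le] at this
    have h3 : r τ ^ (-s) ≤ ((1 - δ) * m0)⁻¹ * f τ := by
      have h4 : r τ ^ (-s) * r' τ ≤ r τ ^ (-s) * ((1 - δ) * m0) :=
        mul_le_mul_of_nonneg_left (hup τ hτ') hA.le
      have h5 := mul_le_mul_of_nonpos_left h4 hKneg.le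
      have hne : (1 - δ) * m0 ≠ 0 := (mul_neg_of_pos_of_neg hδpos hm0).ne
      have h6 : ((1 - δ) * m0)⁻¹ * (r τ ^ (-s) * ((1 - δ) * m0)) = r τ ^ (-s) := by
        rw [mul_comm (r τ ^ (-s)) ((1 - δ) * m0), ← mul_assoc, inv_mul_cancel₀ hne, one_mul]
      rw [h6] at h5
      exact h5
    calc q τ ^ (-s) ≤ (1 - δ) ^ (-s) * r τ ^ (-s) := h2
      _ ≤ (1 - δ) ^ (-s) * (((1 - δ) * m0)⁻¹ * f τ) :=
          mul_le_mul_of_nonneg_left h3 (Real.rpow_pos_of_pos hδpos _).le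
      _ = K * f τ := by rw [hKdef]; ring
  -- main chain
  have hstep1 : ∫ τ in (0:ℝ)..t, q τ ^ (-s) ≤ ∫ τ in (0:ℝ)..t, K * f τ :=
    intervalIntegral.integral_mono_on ht0 hint (hintf.const_mul K) hpt
  have hstep2 : ∫ τ in (0:ℝ)..t, K * f τ
      = K * ((1 - s)⁻¹ * r t ^ (1 - s) - (1 - s)⁻¹ * r 0 ^ (1 - s)) := by
    rw [intervalIntegral.integral_const_mul,
      intervalIntegral.integral_eq_sub_of_hasDerivAt hF hintf]
  -- rewrite K
  have hK : K = (1 - δ) ^ (-(s + 1)) * m0⁻¹ := by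
    rw [hKdef, mul_inv, show -(s+1) = -s + (-1) by ring, Real.rpow_add hδpos,
      Real.rpow_neg_one]
    ring
  -- final comparison
  have hr0pos : 0 < r 0 := hrpos 0 h0mem
  have hr0 : r 0 ≤ (1 - δ)⁻¹ := by
    have := (hqr 0 h0mem).2
    have h1 : (1 - δ)⁻¹ * q 0 ≤ (1 - δ)⁻¹ * 1 :=
      mul_le_mul_of_nonneg_left (hq 0 h0mem).2 (by positivity)
    simpa using le_trans this h1
  have hrt : q t ≤ r t := (hqr t htmem).1
  have hrtpos : 0 < r t := hrpos t htmem
  have hDE : ((1 - δ)⁻¹) ^ (1 - s) = (1 - δ) ^ (s - 1) := by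
    rw [← Real.rpow_neg_one (1 - δ), ← Real.rpow_mul hδpos.le]
    norm_num
  have main : m0⁻¹ * ((1 - s)⁻¹ * (r t ^ (1 - s) - r 0 ^ (1 - s)))
      ≤ m0⁻¹ * ((1 - s)⁻¹ * (q t ^ (1 - s) - (1 - δ) ^ (s - 1))) := by
    rcases lt_or_gt_of_ne hs1 with h1 | h1
    · have hb : (0:ℝ) ≤ (1 - s)⁻¹ := by
        have : (0:ℝ) < 1 - s := by linarith
        positivity
      have f1 : q t ^ (1 - s) ≤ r t ^ (1 - s) :=
        Real.rpow_le_rpow hqt1.le hrt (by linarith)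
      have f2 : r 0 ^ (1 - s) ≤ (1 - δ) ^ (s - 1) := by
        rw [← hDE]; exact Real.rpow_le_rpow hr0pos.le hr0 (by linarith)
      have h5 : (1 - s)⁻¹ * (q t ^ (1 - s) - (1 - δ) ^ (s - 1))
          ≤ (1 - s)⁻¹ * (r t ^ (1 - s) - r 0 ^ (1 - s)) :=
        mul_le_mul_of_nonneg_left (by linarith) hb
      exact mul_le_mul_of_nonpos_left h5 hm0inv.le
    · have hb : (1 - s)⁻¹ ≤ 0 := (inv_lt_zero.2 (by linarith)).le
      have f1 : r t ^ (1 - s) ≤ q t ^ (1 - s) :=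
        Real.rpow_le_rpow_of_nonpos hqt1 hrt (by linarith)
      have f2 : (1 - δ) ^ (s - 1) ≤ r 0 ^ (1 - s) := by
        rw [← hDE]; exact Real.rpow_le_rpow_of_nonpos hr0pos hr0 (by linarith)
      have h5 : (1 - s)⁻¹ * (q t ^ (1 - s) - (1 - δ) ^ (s - 1))
          ≤ (1 - s)⁻¹ * (r t ^ (1 - s) - r 0 ^ (1 - s)) :=
        mul_le_mul_of_nonpos_left (by linarith) hb
      exact mul_le_mul_of_nonpos_left h5 hm0inv.le
  have hfinal : K * ((1 - s)⁻¹ * r t ^ (1 - s) - (1 - s)⁻¹ * r 0 ^ (1 - s))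
      ≤ -((1 - δ) ^ (-(s + 1)) * (1 - s)⁻¹ * m0⁻¹ *
          ((1 - δ) ^ (s - 1) - (q t) ^ (1 - s))) := by
    have := mul_le_mul_of_nonneg_left main hApos.le
    calc K * ((1 - s)⁻¹ * r t ^ (1 - s) - (1 - s)⁻¹ * r 0 ^ (1 - s))
        = (1 - δ) ^ (-(s + 1)) * (m0⁻¹ * ((1 - s)⁻¹ * (r t ^ (1 - s) - r 0 ^ (1 - s)))) := by
          rw [hK]; ring
      _ ≤ (1 - δ) ^ (-(s + 1)) * (m0⁻¹ * ((1 - s)⁻¹ * (q t ^ (1 - s) - (1 - δ) ^ (s - 1)))) := this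
      _ = -((1 - δ) ^ (-(s + 1)) * (1 - s)⁻¹ * m0⁻¹ *
          ((1 - δ) ^ (s - 1) - (q t) ^ (1 - s))) := by ring
  calc ∫ τ in (0:ℝ)..t, q τ ^ (-s) ≤ ∫ τ in (0:ℝ)..t, K * f τ := hstep1
    _ = K * ((1 - s)⁻¹ * r t ^ (1 - s) - (1 - s)⁻¹ * r 0 ^ (1 - s)) := hstep2
    _ ≤ _ := hfinal
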